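/- Let Y be a Banach space and T : Y → Y a compact operator such that I + T is injective. Then I + T is bijective with bounded inverse (Fredholm alternative), and moreover for any family of Banach spaces Y_ε with asymptotically norm-preserving operators E_ε : Y → Y_ε and compact operators T_ε : Y_ε → Y_ε converging compactly to T, the kernels ker(I + T_ε) are trivial for all sufficiently small ε. -/

import Mathlib

open Filter Topology
set_option linter.unusedSectionVars false
set_option maxHeartbeats 1000000

section FredholmAux
variable {Y : Type*} [NormedAddCommGroup Y] [NormedSpace ℝ Y] [CompleteSpace Y]

lemma compact_subseq (T : Y →L[ℝ] Y) (hT : IsCompactOperator T)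
    (x : ℕ → Y) (M : ℝ) (hx : ∀ n, ‖x n‖ ≤ M) :
    ∃ (φ : ℕ → ℕ) (z : Y), StrictMono φ ∧ Tendsto (fun n => T (x (φ n))) atTop (𝓝 z) := by
  have hb : Bornology.IsBounded (Metric.closedBall (0:Y) M) := Metric.isBounded_closedBall
  have hK : IsCompact (closure (T '' Metric.closedBall (0:Y) M)) :=
    hT.isCompact_closure_image_of_bounded hb
  have hmem : ∀ n, T (x n) ∈ closure (T '' Metric.closedBall (0:Y) M) := fun n =>
    subset_closure ⟨x n, by simpa [Metric.mem_closedBall, dist_zero_right] using hx n, rfl⟩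
  obtain ⟨z, _, φ, hφ, hconv⟩ := hK.tendsto_subseq hmem
  exact ⟨φ, z, hφ, hconv⟩

lemma bdd_below_of_inj (T : Y →L[ℝ] Y) (hT : IsCompactOperator T)
    (hinj : Function.Injective (ContinuousLinearMap.id ℝ Y + T)) :
    ∃ c > (0:ℝ), ∀ x, c * ‖x‖ ≤ ‖(ContinuousLinearMap.id ℝ Y + T) x‖ := by
  set A := ContinuousLinearMap.id ℝ Y + T with hA
  by_contra h
  push_neg at h
  have hsel : ∀ n : ℕ, ∃ x : Y, ‖A x‖ < ((n:ℝ)+1)⁻¹ * ‖x‖ := by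
    intro n
    obtain ⟨x, hx⟩ := h (((n:ℝ)+1)⁻¹) (by positivity)
    exact ⟨x, hx⟩
  choose x hx using hsel
  have hxne : ∀ n, x n ≠ 0 := by
    intro n hn
    have := hx n
    rw [hn] at this
    simp at this
  set u : ℕ → Y := fun n => ‖x n‖⁻¹ • x n with hu
  have hun : ∀ n, ‖u n‖ = 1 := by
    intro n
    rw [hu]
    simp [norm_smul, inv_mul_cancel₀ (norm_ne_zero_iff.2 (hxne n))]
  have hAu : ∀ n, ‖A (u n)‖ < ((n:ℝ)+1)⁻¹ := by
    intro n
    have h1 : A (u n) = ‖x n‖⁻¹ • A (x n) := by simp [hu, map_smul]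
    rw [h1, norm_smul, norm_inv, norm_norm]
    have hpos : (0:ℝ) < ‖x n‖ := norm_pos_iff.2 (hxne n)
    rw [inv_mul_lt_iff₀ hpos]
    calc ‖A (x n)‖ < ((n:ℝ)+1)⁻¹ * ‖x n‖ := hx n
    _ = ‖x n‖ * ((n:ℝ)+1)⁻¹ := mul_comm _ _
  have hAu0 : Tendsto (fun n => A (u n)) atTop (𝓝 0) := by
    rw [tendsto_zero_iff_norm_tendsto_zero]
    refine squeeze_zero (fun n => norm_nonneg _) (fun n => le_of_lt (hAu n)) ?_
    exact tendsto_one_div_add_atTop_nhds_zero_nat.congr (by simp [one_div])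
  obtain ⟨φ, z, hφ, hz⟩ := compact_subseq T hT u 1 (fun n => (hun n).le)
  have hA0 : Tendsto (fun n => A (u (φ n))) atTop (𝓝 0) := hAu0.comp hφ.tendsto_atTop
  have huz : Tendsto (fun n => u (φ n)) atTop (𝓝 (-z)) := by
    have : ∀ n, u (φ n) = A (u (φ n)) - T (u (φ n)) := by
      intro n; simp [hA]
    rw [show (-z : Y) = 0 - z by abel]
    exact (hA0.sub hz).congr (fun n => (this n).symm)
  have hz1 : ‖(-z : Y)‖ = 1 :=
    tendsto_nhds_unique ((continuous_norm.tendsto _).comp huz)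
      (by
        have : (fun n => ‖u (φ n)‖) = fun _ => (1:ℝ) := funext fun n => hun (φ n)
        show Tendsto (fun n => ‖u (φ n)‖) atTop (𝓝 1)
        rw [this]; exact tendsto_const_nhds)
  have hAz : A (-z) = 0 := by
    have h1 : Tendsto (fun n => A (u (φ n))) atTop (𝓝 (A (-z))) := (A.continuous.tendsto _).comp huz
    exact tendsto_nhds_unique h1 hA0
  have : (-z : Y) = 0 := hinj (by simpa using hAz)
  rw [this] at hz1; simp at hz1

lemma riesz_step (F G : Submodule ℝ Y) (hFG : F ≤ G) (hF : IsClosed (F : Set Y))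
    (v : Y) (hvG : v ∈ G) (hvF : v ∉ F) :
    ∃ u ∈ G, ‖u‖ = 1 ∧ ∀ z ∈ F, (1:ℝ)/2 ≤ ‖u - z‖ := by
  have hne : (F : Set Y).Nonempty := ⟨0, F.zero_mem⟩
  set d := Metric.infDist v (F : Set Y) with hd
  have hd0 : 0 < d := by
    rcases lt_or_eq_of_le (Metric.infDist_nonneg (s := (F : Set Y)) (x := v)) with h | h
    · exact h
    · exact absurd ((hF.mem_iff_infDist_zero hne).2 h.symm) hvF
  obtain ⟨y, hyF, hyd⟩ := (Metric.infDist_lt_iff hne).1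
    (show Metric.infDist v (F : Set Y) < 2 * d by rw [← hd]; linarith)
  set w := v - y with hw
  have hw0 : w ≠ 0 := fun h => hvF (by rw [sub_eq_zero] at h; exact h ▸ hyF)
  have hwn : ‖w‖ < 2 * d := by rwa [dist_eq_norm] at hyd
  have hwd : ∀ z ∈ F, d ≤ ‖w - z‖ := by
    intro z hz
    have : y + z ∈ (F : Set Y) := F.add_mem hyF hz
    have h1 : d ≤ dist v (y + z) := Metric.infDist_le_dist_of_mem this
    rwa [dist_eq_norm, show v - (y + z) = w - z by rw [hw]; abel] at h1
  have hwnorm : (0:ℝ) < ‖w‖ := norm_pos_iff.2 hw0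
  have hwG : w ∈ G := G.sub_mem hvG (hFG hyF)
  clear_value w
  refine ⟨‖w‖⁻¹ • w, G.smul_mem _ hwG, ?_, ?_⟩
  · simp [norm_smul, inv_mul_cancel₀ hwnorm.ne']
  · intro z hz
    have heq : ‖w‖⁻¹ • w - z = ‖w‖⁻¹ • (w - ‖w‖ • z) := by
      rw [smul_sub, smul_smul, inv_mul_cancel₀ hwnorm.ne', one_smul]
    rw [heq, norm_smul, norm_inv, norm_norm]
    have h1 : d ≤ ‖w - ‖w‖ • z‖ := hwd _ (F.smul_mem _ hz)
    have h2 : (2*d)⁻¹ ≤ ‖w‖⁻¹ := by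
      apply inv_anti₀ hwnorm hwn.le
    calc (1:ℝ)/2 = (2*d)⁻¹ * d := by field_simp
    _ ≤ ‖w‖⁻¹ * ‖w - ‖w‖ • z‖ := by
        apply mul_le_mul h2 h1 hd0.le (le_of_lt (inv_pos.2 hwnorm))

lemma surj_of_inj (T : Y →L[ℝ] Y) (hT : IsCompactOperator T)
    (hinj : Function.Injective (ContinuousLinearMap.id ℝ Y + T)) :
    Function.Surjective (ContinuousLinearMap.id ℝ Y + T) := by
  set A := ContinuousLinearMap.id ℝ Y + T with hA
  -- powers are id + compact
  have hpow : ∀ n : ℕ, ∃ S : Y →L[ℝ] Y, IsCompactOperator S ∧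
      A ^ n = ContinuousLinearMap.id ℝ Y + S := by
    intro n
    induction n with
    | zero => exact ⟨0, isCompactOperator_zero, by simp [pow_zero]; rfl⟩
    | succ n ih =>
      obtain ⟨S, hScomp, hSeq⟩ := ih
      refine ⟨T + S.comp A, ?_, ?_⟩
      · exact hT.add (hScomp.comp_clm A)
      · rw [pow_succ, hSeq]
        ext x
        simp [ContinuousLinearMap.mul_apply, hA, map_add]
        abel
  -- injectivity of powers
  have hpinj : ∀ n : ℕ, Function.Injective (A ^ n) := by
    intro n
    induction n with
    | zero => simpa [pow_zero] using (Function.injective_id : Function.Injective (id : Y → Y))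
    | succ n ih =>
      intro x y hxy
      rw [pow_succ] at hxy
      simp only [ContinuousLinearMap.mul_apply] at hxy
      exact hinj (ih hxy)
  -- closed ranges
  set M : ℕ → Submodule ℝ Y := fun n => LinearMap.range ((A ^ n : Y →L[ℝ] Y) : Y →ₗ[ℝ] Y) with hM
  have hMclosed : ∀ n, IsClosed ((M n : Set Y)) := by
    intro n
    obtain ⟨S, hScomp, hSeq⟩ := hpow n
    have hinj' : Function.Injective (ContinuousLinearMap.id ℝ Y + S) := by
      rw [← hSeq]; exact hpinj n
    obtain ⟨c, hc0, hc⟩ := bdd_below_of_inj S hScomp hinj'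
    have hbound : ∀ x, ‖x‖ ≤ (⟨c⁻¹, inv_nonneg.2 hc0.le⟩ : NNReal) * ‖(A ^ n) x‖ := by
      intro x
      have h1 := hc x
      rw [← hSeq] at h1
      show ‖x‖ ≤ c⁻¹ * ‖(A ^ n) x‖
      rw [← mul_le_mul_iff_right₀ hc0, ← mul_assoc, mul_inv_cancel₀ hc0.ne', one_mul]
      exact h1
    have halip := AddMonoidHomClass.antilipschitz_of_bound (A ^ n) hbound
    have := halip.isClosed_range (A ^ n).uniformContinuous
    simpa only [hM, LinearMap.coe_range, ContinuousLinearMap.coe_coe] using this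
  -- monotone: M antitone
  have hManti : ∀ k l : ℕ, k ≤ l → M l ≤ M k := by
    intro k l hkl x hx
    obtain ⟨w, hw⟩ := hx
    refine ⟨(A ^ (l - k)) w, ?_⟩
    rw [ContinuousLinearMap.coe_coe, ← ContinuousLinearMap.mul_apply, ← pow_add, Nat.add_sub_cancel' hkl]
    exact hw
  have hMsucc : ∀ n (x : Y), x ∈ M n → A x ∈ M (n + 1) := by
    intro n x hx
    obtain ⟨w, hw⟩ := hx
    exact ⟨w, by rw [ContinuousLinearMap.coe_coe] at hw; rw [ContinuousLinearMap.coe_coe, pow_succ', ContinuousLinearMap.mul_apply, hw]⟩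
  -- suppose not surjective
  by_contra hsurj
  rw [Function.Surjective] at hsurj
  push_neg at hsurj
  obtain ⟨y₀, hy₀⟩ := hsurj
  -- strict decrease
  have hstrict : ∀ n : ℕ, ∃ v ∈ M n, v ∉ M (n + 1) := by
    intro n
    refine ⟨(A ^ n) y₀, ⟨y₀, rfl⟩, ?_⟩
    rintro ⟨w, hw⟩
    rw [ContinuousLinearMap.coe_coe, pow_succ, ContinuousLinearMap.mul_apply] at hw
    exact hy₀ w (hpinj n hw)
  -- Riesz sequence
  have hseq : ∀ n : ℕ, ∃ u ∈ M n, ‖u‖ = 1 ∧ ∀ z ∈ M (n + 1), (1:ℝ)/2 ≤ ‖u - z‖ := by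
    intro n
    obtain ⟨v, hvn, hvn1⟩ := hstrict n
    exact riesz_step (M (n + 1)) (M n) (hManti n (n+1) (Nat.le_succ n)) (hMclosed (n+1)) v hvn hvn1
  choose x hxM hxnorm hxsep using hseq
  -- separation of T-images
  have hTsep : ∀ m n : ℕ, n < m → (1:ℝ)/2 ≤ ‖T (x n) - T (x m)‖ := by
    intro m n hnm
    have hz : A (x n) - A (x m) + x m ∈ M (n + 1) := by
      refine Submodule.add_mem _ (Submodule.sub_mem _ ?_ ?_) ?_
      · exact hMsucc n _ (hxM n)
      · exact hManti (n+1) (m+1) (by omega) (hMsucc m _ (hxM m))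
      · exact hManti (n+1) m hnm (hxM m)
    have heq : T (x n) - T (x m) = -(x n - (A (x n) - A (x m) + x m)) := by
      have h1 : ∀ v : Y, T v = A v - v := by intro v; simp [hA]
      rw [h1, h1]; abel
    rw [heq, norm_neg]
    exact hxsep n _ hz
  -- contradiction with compactness
  obtain ⟨φ, z, hφ, hz⟩ := compact_subseq T hT x 1 (fun n => (hxnorm n).le)
  have hcauchy : CauchySeq (fun n => T (x (φ n))) := hz.cauchySeq
  rw [Metric.cauchySeq_iff] at hcauchy
  obtain ⟨N, hN⟩ := hcauchy (1/2) (by norm_num)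
  have h1 := hN (N+1) (Nat.le_succ N) N le_rfl
  rw [dist_eq_norm] at h1
  have h2 := hTsep (φ (N+1)) (φ N) (hφ (Nat.lt_succ_self N))
  rw [norm_sub_rev] at h1
  linarith

end FredholmAux

/-- Fredholm alternative and stability of trivial kernels under compact convergence: if
`T` is compact and `I + T` is injective, then `I + T` has a bounded two-sided inverse, and
for any family of compact operators `T_ε` converging compactly to `T` (via asymptotically
norm-preserving operators `E_ε`), the kernels `ker(I + T_ε)` are trivial for small `ε`. -/
theorem stmt_15 (Y : Type*) [NormedAddCommGroup Y] [NormedSpace ℝ Y] [CompleteSpace Y]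
    (T : Y →L[ℝ] Y) (hTcomp : IsCompactOperator T)
    (hinj : Function.Injective (ContinuousLinearMap.id ℝ Y + T))
    (ε₀ : ℝ) (hε₀ : 0 < ε₀)
    (Yε : ℝ → Type*) [∀ ε, NormedAddCommGroup (Yε ε)] [∀ ε, NormedSpace ℝ (Yε ε)]
    [∀ ε, CompleteSpace (Yε ε)]
    (E : ∀ ε, Y →L[ℝ] Yε ε)
    (hE : ∀ u : Y, Tendsto (fun ε => ‖E ε u‖) (𝓝[>] 0) (𝓝 ‖u‖))
    (Tε : ∀ ε, Yε ε →L[ℝ] Yε ε) (hTε : ∀ ε, IsCompactOperator (Tε ε))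
    -- compact convergence, part 1: E-precompactness of images of bounded families
    (hprecomp : ∀ (e : ℕ → ℝ), (∀ n, e n ∈ Set.Ioc (0 : ℝ) ε₀) →
      Tendsto e atTop (𝓝 0) →
      ∀ (u : ∀ n, Yε (e n)) (M : ℝ), (∀ n, ‖u n‖ ≤ M) →
        ∃ (φ : ℕ → ℕ) (y : Y), StrictMono φ ∧
          Tendsto (fun n => ‖Tε (e (φ n)) (u (φ n)) - E (e (φ n)) y‖) atTop (𝓝 0))
    -- compact convergence, part 2: EE-convergence
    (hEE : ∀ (e : ℕ → ℝ), (∀ n, e n ∈ Set.Ioc (0 : ℝ) ε₀) →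
      Tendsto e atTop (𝓝 0) →
      ∀ (u : ∀ n, Yε (e n)) (y : Y),
        Tendsto (fun n => ‖u n - E (e n) y‖) atTop (𝓝 0) →
        Tendsto (fun n => ‖Tε (e n) (u n) - E (e n) (T y)‖) atTop (𝓝 0)) :
    (∃ S : Y →L[ℝ] Y,
      (∀ y, S ((ContinuousLinearMap.id ℝ Y + T) y) = y) ∧
      (∀ y, (ContinuousLinearMap.id ℝ Y + T) (S y) = y)) ∧
    ∃ ε₁ > (0 : ℝ), ∀ ε ∈ Set.Ioc (0 : ℝ) ε₁,
      ∀ x : Yε ε, (ContinuousLinearMap.id ℝ (Yε ε) + Tε ε) x = 0 → x = 0 := by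
  constructor
  · -- Part 1: Fredholm alternative
    set A := ContinuousLinearMap.id ℝ Y + T with hA
    have hsurj : Function.Surjective A := surj_of_inj T hTcomp hinj
    have hker : LinearMap.ker (A : Y →ₗ[ℝ] Y) = ⊥ := LinearMap.ker_eq_bot.2 hinj
    have hrange : LinearMap.range (A : Y →ₗ[ℝ] Y) = ⊤ := LinearMap.range_eq_top.2 hsurj
    let e := ContinuousLinearEquiv.ofBijective A hker hrange
    refine ⟨(e.symm : Y →L[ℝ] Y), ?_, ?_⟩
    · intro y
      have : e y = A y := rfl
      show e.symm (A y) = y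
      rw [← this, e.symm_apply_apply]
    · intro y
      show A (e.symm y) = y
      have : A (e.symm y) = e (e.symm y) := rfl
      rw [this, e.apply_symm_apply]
  · -- Part 2: triviality of kernels for small ε
    by_contra h
    push_neg at h
    have hsel : ∀ n : ℕ, ∃ ε ∈ Set.Ioc (0:ℝ) (min ε₀ (1/((n:ℝ)+1))),
        ∃ x : Yε ε, (ContinuousLinearMap.id ℝ (Yε ε) + Tε ε) x = 0 ∧ x ≠ 0 := by
      intro n
      obtain ⟨ε, hε1, x, hx1, hx2⟩ := h (min ε₀ (1/((n:ℝ)+1))) (lt_min hε₀ (by positivity))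
      exact ⟨ε, hε1, x, hx1, hx2⟩
    choose e he x hx1 hx2 using hsel
    have heIoc : ∀ n, e n ∈ Set.Ioc (0:ℝ) ε₀ :=
      fun n => ⟨(he n).1, (he n).2.trans (min_le_left _ _)⟩
    have he0 : Tendsto e atTop (𝓝 0) := by
      refine squeeze_zero (fun n => (he n).1.le)
        (fun n => (he n).2.trans (min_le_right _ _)) ?_
      exact tendsto_one_div_add_atTop_nhds_zero_nat
    set u : ∀ n, Yε (e n) := fun n => ‖x n‖⁻¹ • x n with hu
    have hun : ∀ n, ‖u n‖ = 1 := by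
      intro n
      simp [hu, norm_smul, inv_mul_cancel₀ (norm_ne_zero_iff.2 (hx2 n))]
    have hTu : ∀ n, Tε (e n) (u n) = -u n := by
      intro n
      have h1 : x n + Tε (e n) (x n) = 0 := by
        have := hx1 n
        simpa using this
      have h2 : Tε (e n) (x n) = -x n := eq_neg_of_add_eq_zero_right h1
      simp [hu, map_smul, h2]
    obtain ⟨φ, y, hφ, hconv⟩ := hprecomp e heIoc he0 u 1 (fun n => (hun n).le)
    set e' : ℕ → ℝ := fun n => e (φ n) with he'
    set u' : ∀ n, Yε (e' n) := fun n => u (φ n) with hu'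
    have heIoc' : ∀ n, e' n ∈ Set.Ioc (0:ℝ) ε₀ := fun n => heIoc (φ n)
    have he0' : Tendsto e' atTop (𝓝 0) := he0.comp hφ.tendsto_atTop
    have hconv1 : Tendsto (fun n => ‖u' n - E (e' n) (-y)‖) atTop (𝓝 0) := by
      refine hconv.congr (fun n => ?_)
      rw [hTu (φ n)]
      rw [show -u (φ n) - E (e (φ n)) y = -(u (φ n) - E (e (φ n)) (-y)) by
        rw [map_neg]; abel]
      rw [norm_neg]
    have hconv2 : Tendsto (fun n => ‖u' n - E (e' n) (T y)‖) atTop (𝓝 0) := by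
      have h3 := hEE e' heIoc' he0' u' (-y) hconv1
      refine h3.congr (fun n => ?_)
      rw [hTu (φ n)]
      show ‖-u' n - E (e' n) (T (-y))‖ = _
      rw [show -u' n - E (e' n) (T (-y)) = -(u' n - E (e' n) (T y)) by
        rw [map_neg, map_neg]; abel]
      rw [norm_neg]
    have hdiff : Tendsto (fun n => ‖E (e' n) (T y + y)‖) atTop (𝓝 0) := by
      have hb : ∀ n, ‖E (e' n) (T y + y)‖ ≤
          ‖u' n - E (e' n) (T y)‖ + ‖u' n - E (e' n) (-y)‖ := by
        intro n
        have heq : E (e' n) (T y + y) =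
            -(u' n - E (e' n) (T y)) + (u' n - E (e' n) (-y)) := by
          rw [map_add, map_neg]; abel
        rw [heq]
        exact (norm_add_le _ _).trans (by rw [norm_neg])
      have hsum : Tendsto (fun n => ‖u' n - E (e' n) (T y)‖ + ‖u' n - E (e' n) (-y)‖)
          atTop (𝓝 0) := by
        simpa using hconv2.add hconv1
      exact squeeze_zero (fun n => norm_nonneg _) hb hsum
    have he0'' : Tendsto e' atTop (𝓝[>] (0:ℝ)) :=
      tendsto_nhdsWithin_of_tendsto_nhds_of_eventually_within e' he0'
        (Eventually.of_forall fun n => (heIoc' n).1)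
    have hlim : Tendsto (fun n => ‖E (e' n) (T y + y)‖) atTop (𝓝 ‖T y + y‖) :=
      (hE (T y + y)).comp he0''
    have hTy : T y + y = 0 := by
      have := tendsto_nhds_unique hlim hdiff
      exact norm_eq_zero.1 this
    have hy0 : y = 0 := by
      apply hinj
      show y + T y = (ContinuousLinearMap.id ℝ Y + T) 0
      simp only [map_zero]
      rw [← hTy]; abel
    have hfin : Tendsto (fun n => ‖u' n‖) atTop (𝓝 0) := by
      refine hconv1.congr (fun n => ?_)
      rw [hy0]
      simp
    have : (1:ℝ) = 0 := by
      refine tendsto_nhds_unique ?_ hfin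
      have : (fun n => ‖u' n‖) = fun _ => (1:ℝ) := funext fun n => hun (φ n)
      rw [this]; exact tendsto_const_nhds
    norm_num at this
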